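/- Let W be a model of ZFC⁻ satisfying every instance of the DC_δ-scheme for a regular cardinal δ of W, and let P be a class partial order of W (a class of W equipped with a class partial ordering) such that every antichain of P that is a set of W has cardinality less than δ in W. Then every dense subclass D of P contains a set of W that is a maximal antichain of P; in particular, P is pretame. -/

import Mathlib

open FirstOrder Language

/-- The language of set theory: one binary relation symbol `∈`. -/
def setLang : FirstOrder.Language :=
  ⟨fun _ => Empty, fun n => match n with | 2 => Unit | _ => Empty⟩

/-- The `setLang`-structure on a type `W` induced by a binary relation `E`. -/
def memStruc (W : Type*) (E : W → W → Prop) : setLang.Structure W where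
  funMap := fun f _ => f.elim
  RelMap := fun {n} r xs =>
    match n, r, xs with
    | 2, _, xs => E (xs 0) (xs 1)

/-- Satisfaction of a formula of the language of set theory in `(W, E)`,
with free variables interpreted by `xs`. -/
def Sat {W : Type*} (E : W → W → Prop) {n : ℕ} (φ : setLang.BoundedFormula Empty n)
    (xs : Fin n → W) : Prop :=
  @FirstOrder.Language.BoundedFormula.Realize setLang W (memStruc W E) Empty n φ Empty.elim xs

section Defs

variable {W : Type*}

/-- `x` is a transitive set. -/
def IsTransSet (E : W → W → Prop) (x : W) : Prop :=
  ∀ y, E y x → ∀ z, E z y → E z x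

/-- `x` is an ordinal: a transitive set linearly preordered by `E` (the standard
definition in the presence of foundation). -/
def IsOrd (E : W → W → Prop) (x : W) : Prop :=
  IsTransSet E x ∧ ∀ u v, E u x → E v x → (E u v ∨ u = v ∨ E v u)

/-- `p` is the unordered pair `{a, b}`. -/
def IsUPair (E : W → W → Prop) (a b p : W) : Prop :=
  ∀ z, E z p ↔ (z = a ∨ z = b)

/-- `p` is the Kuratowski ordered pair `⟨a, b⟩`. -/
def IsOPair (E : W → W → Prop) (a b p : W) : Prop :=
  ∃ s t, IsUPair E a a s ∧ IsUPair E a b t ∧ IsUPair E s t p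

/-- The ordered pair `⟨u, v⟩` is a member of `r`. -/
def OPairMem (E : W → W → Prop) (r u v : W) : Prop :=
  ∃ p, E p r ∧ IsOPair E u v p

/-- `f` is a (set) function with domain `d`. -/
def IsFuncOn (E : W → W → Prop) (f d : W) : Prop :=
  (∀ p, E p f → ∃ u v, E u d ∧ IsOPair E u v p) ∧
  (∀ u, E u d → ∃ v, OPairMem E f u v) ∧
  (∀ u v v', OPairMem E f u v → OPairMem E f u v' → v = v')

/-- `f(u) = v`. -/
def FunApp (E : W → W → Prop) (f u v : W) : Prop := OPairMem E f u v

/-- all values of `f` are members of `y`. -/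
def MapsInto (E : W → W → Prop) (f y : W) : Prop :=
  ∀ u v, OPairMem E f u v → E v y

/-- `f` is an injection of `x` into `y`. -/
def IntInj (E : W → W → Prop) (f x y : W) : Prop :=
  IsFuncOn E f x ∧ MapsInto E f y ∧
  ∀ u u' v, OPairMem E f u v → OPairMem E f u' v → u = u'

/-- `f` is a surjection of `x` onto `y`. -/
def IntSurj (E : W → W → Prop) (f x y : W) : Prop :=
  IsFuncOn E f x ∧ MapsInto E f y ∧ ∀ v, E v y → ∃ u, E u x ∧ OPairMem E f u v

/-- `f` is a bijection between `x` and `y`. -/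
def IntBij (E : W → W → Prop) (f x y : W) : Prop :=
  IntInj E f x y ∧ IntSurj E f x y

/-- `κ` is a cardinal: an ordinal not in bijection with any smaller ordinal. -/
def IsCardinal (E : W → W → Prop) (κ : W) : Prop :=
  IsOrd E κ ∧ ∀ α, E α κ → ¬ ∃ f, IntBij E f α κ

/-- `s = x ∪ {x}`. -/
def IsSuccOf (E : W → W → Prop) (s x : W) : Prop :=
  ∀ z, E z s ↔ (E z x ∨ z = x)

/-- `n` is a natural number: an ordinal all of whose members (and itself) are
zero or successor ordinals. -/
def IsNatOrd (E : W → W → Prop) (n : W) : Prop :=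
  IsOrd E n ∧ ∀ m, (E m n ∨ m = n) → ((∀ z, ¬ E z m) ∨ ∃ k, IsSuccOf E m k)

/-- `o` is the ordinal `ω`. -/
def IsOmega (E : W → W → Prop) (o : W) : Prop :=
  IsOrd E o ∧ ¬ IsNatOrd E o ∧ ∀ m, E m o → IsNatOrd E m

/-- `δ` is a regular cardinal: a cardinal such that the range of any set function
from a smaller ordinal into `δ` is bounded in `δ`. -/
def IsRegular' (E : W → W → Prop) (δ : W) : Prop :=
  IsCardinal E δ ∧
  ∀ α f, E α δ → IsFuncOn E f α → MapsInto E f δ →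
    ∃ β, E β δ ∧ ∀ u v, OPairMem E f u v → (E v β ∨ v = β)

/-- `r` is a well-ordering of the set `x`. -/
def IsWellOrderOn (E : W → W → Prop) (r x : W) : Prop :=
  (∀ p, E p r → ∃ u v, E u x ∧ E v x ∧ IsOPair E u v p) ∧
  (∀ u v, E u x → E v x → (OPairMem E r u v ∨ u = v ∨ OPairMem E r v u)) ∧
  (∀ u v w, OPairMem E r u v → OPairMem E r v w → OPairMem E r u w) ∧
  (∀ u, ¬ OPairMem E r u u) ∧
  (∀ z, (∀ w, E w z → E w x) → (∃ w, E w z) → ∃ m, E m z ∧ ∀ w, E w z → w ≠ m → OPairMem E r m w)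

/-- Extensionality. -/
def Extensionality (E : W → W → Prop) : Prop :=
  ∀ x y, (∀ z, E z x ↔ E z y) → x = y

/-- The empty set axiom. -/
def EmptySetAx (E : W → W → Prop) : Prop := ∃ e, ∀ z, ¬ E z e

/-- The pairing axiom. -/
def PairingAx (E : W → W → Prop) : Prop := ∀ x y, ∃ p, IsUPair E x y p

/-- The union axiom. -/
def UnionAx (E : W → W → Prop) : Prop :=
  ∀ x, ∃ u, ∀ z, (E z u ↔ ∃ w, E w x ∧ E z w)

/-- The axiom of infinity. -/
def InfinityAx (E : W → W → Prop) : Prop :=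
  ∃ I, (∃ e, E e I ∧ ∀ z, ¬ E z e) ∧ ∀ x, E x I → ∃ s, E s I ∧ IsSuccOf E s x

/-- The foundation scheme: every nonempty definable class has an `E`-minimal element. -/
def FoundationScheme (E : W → W → Prop) : Prop :=
  ∀ (n : ℕ) (φ : setLang.BoundedFormula Empty (n + 1)) (p : Fin n → W),
    (∃ x, Sat E φ (Fin.snoc p x)) →
      ∃ x, Sat E φ (Fin.snoc p x) ∧ ∀ y, E y x → ¬ Sat E φ (Fin.snoc p y)

/-- The separation scheme. -/
def SeparationScheme (E : W → W → Prop) : Prop :=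
  ∀ (n : ℕ) (φ : setLang.BoundedFormula Empty (n + 1)) (p : Fin n → W) (a : W),
    ∃ b, ∀ z, (E z b ↔ (E z a ∧ Sat E φ (Fin.snoc p z)))

/-- The collection scheme. -/
def CollectionScheme (E : W → W → Prop) : Prop :=
  ∀ (n : ℕ) (φ : setLang.BoundedFormula Empty (n + 2)) (p : Fin n → W) (a : W),
    (∀ x, E x a → ∃ y, Sat E φ (Fin.snoc (Fin.snoc p x) y)) →
      ∃ b, ∀ x, E x a → ∃ y, E y b ∧ Sat E φ (Fin.snoc (Fin.snoc p x) y)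

/-- The well-ordering principle: every set can be well-ordered. -/
def WellOrderingPrin (E : W → W → Prop) : Prop :=
  ∀ x, ∃ r, IsWellOrderOn E r x

/-- `(W, E) ⊨ ZFC⁻`: ZFC without the power set axiom, with collection and
the well-ordering principle. -/
def ZFCminus (E : W → W → Prop) : Prop :=
  Extensionality E ∧ EmptySetAx E ∧ PairingAx E ∧ UnionAx E ∧ InfinityAx E ∧
  FoundationScheme E ∧ SeparationScheme E ∧ CollectionScheme E ∧ WellOrderingPrin E

/-- The power set axiom. -/
def PowerSetAx (E : W → W → Prop) : Prop :=
  ∀ x, ∃ p, ∀ z, (E z p ↔ ∀ w, E w z → E w x)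

/-- `(W, E) ⊨ ZFC`. -/
def ZFC' (E : W → W → Prop) : Prop := ZFCminus E ∧ PowerSetAx E

/-- `g = f ↾ ξ`. -/
def IsRestrictionOf (E : W → W → Prop) (f ξ g : W) : Prop :=
  ∀ p, (E p g ↔ (E p f ∧ ∃ u v, E u ξ ∧ IsOPair E u v p))

/-- The `DC_δ`-scheme: for every definable relation `φ(x, y, p̄)` without terminal
nodes there is a function `f` with domain `δ` such that `φ(f ↾ ξ, f(ξ), p̄)` holds
for every `ξ < δ`. -/
def DCScheme (E : W → W → Prop) (δ : W) : Prop :=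
  ∀ (n : ℕ) (φ : setLang.BoundedFormula Empty (n + 2)) (p : Fin n → W),
    (∀ x, ∃ y, Sat E φ (Fin.snoc (Fin.snoc p x) y)) →
      ∃ f, IsFuncOn E f δ ∧
        ∀ ξ, E ξ δ → ∃ g v, IsRestrictionOf E f ξ g ∧ FunApp E f ξ v ∧
          Sat E φ (Fin.snoc (Fin.snoc p g) v)

/-- The class defined by the formula `φ` with parameters `p`. -/
def ClassOf (E : W → W → Prop) {n : ℕ} (φ : setLang.BoundedFormula Empty (n + 1))
    (p : Fin n → W) : Set W :=
  {x | Sat E φ (Fin.snoc p x)}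

/-- A collection of elements of `W` is a proper class if it is not the extension of a set. -/
def IsProperClass (E : W → W → Prop) (C : Set W) : Prop :=
  ¬ ∃ s, ∀ x, (E x s ↔ x ∈ C)

/-- `C` is `δ`-big: there is a definable (with parameters) class surjection of `C` onto `δ`. -/
def IsDeltaBig (E : W → W → Prop) (C : Set W) (δ : W) : Prop :=
  ∃ (n : ℕ) (ψ : setLang.BoundedFormula Empty (n + 2)) (q : Fin n → W),
    (∀ x ∈ C, ∃ y, E y δ ∧ Sat E ψ (Fin.snoc (Fin.snoc q x) y) ∧
      ∀ y', Sat E ψ (Fin.snoc (Fin.snoc q x) y') → y' = y) ∧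
    (∀ ξ, E ξ δ → ∃ x ∈ C, Sat E ψ (Fin.snoc (Fin.snoc q x) ξ))

/-- The membership relation on the members of `M`. -/
def SubRel (E : W → W → Prop) (M : W) : {x // E x M} → {x // E x M} → Prop :=
  fun u v => E u.1 v.1

/-- The membership relation on a subclass `C` of `W`. -/
def SubRelOn (E : W → W → Prop) (C : Set W) : {x // x ∈ C} → {x // x ∈ C} → Prop :=
  fun u v => E u.1 v.1

/-- `ρ` is a rank function on the transitive set `d`: `ρ(u)` is the strict supremum of
`ρ(y) + 1` for `y ∈ u`. -/
def IsRankFunOn (E : W → W → Prop) (ρ d : W) : Prop :=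
  IsFuncOn E ρ d ∧
  ∀ u v, E u d → FunApp E ρ u v →
    (IsOrd E v ∧ (∀ y, E y u → ∃ w, FunApp E ρ y w ∧ E w v) ∧
      ∀ β, E β v → ∃ y w, E y u ∧ FunApp E ρ y w ∧ (E β w ∨ β = w))

/-- `x` has (internal) rank below `κ`. -/
def HasRankBelow (E : W → W → Prop) (x κ : W) : Prop :=
  ∃ d ρ, IsTransSet E d ∧ E x d ∧ IsRankFunOn E ρ d ∧ ∃ v, FunApp E ρ x v ∧ E v κ

/-- `x ⊆ y` (internally). -/
def SubsetE (E : W → W → Prop) (x y : W) : Prop := ∀ z, E z x → E z y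

/-- `p = P(x)` (internally). -/
def IsPowerSetOf (E : W → W → Prop) (p x : W) : Prop :=
  ∀ z, (E z p ↔ SubsetE E z x)

/-- `s = κ⁺`, the least cardinal above `κ`. -/
def IsCardSuccOf (E : W → W → Prop) (κ s : W) : Prop :=
  IsCardinal E s ∧ E κ s ∧ ∀ c, IsCardinal E c → E κ c → ¬ E c s

/-- The continuum hypothesis: `ω₁` is in bijection with `P(ω)`. -/
def CHstat (E : W → W → Prop) : Prop :=
  ∀ o p o1, IsOmega E o → IsPowerSetOf E p o → IsCardSuccOf E o o1 →
    ∃ f, IntBij E f o1 p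

/-- `δ` is an inaccessible cardinal: uncountable, regular and strong limit. -/
def IsInaccessible' (E : W → W → Prop) (δ : W) : Prop :=
  IsRegular' E δ ∧ (∃ o, IsOmega E o ∧ E o δ) ∧
  ∀ α p, E α δ → IsPowerSetOf E p α → ∃ γ, E γ δ ∧ ∃ f, IntBij E f p γ

/-- `c` is the relative complement `κ \ x`. -/
def IsRelCompl (E : W → W → Prop) (κ x c : W) : Prop :=
  ∀ z, (E z c ↔ (E z κ ∧ ¬ E z x))

/-- `κ` is a measurable cardinal: there is a `κ`-complete nonprincipal ultrafilter on `κ`. -/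
def IsMeasurable' (E : W → W → Prop) (κ : W) : Prop :=
  IsCardinal E κ ∧ (∃ o, IsOmega E o ∧ E o κ) ∧
  ∃ u, (∀ x, E x u → SubsetE E x κ) ∧ E κ u ∧ (¬ ∃ e, E e u ∧ ∀ z, ¬ E z e) ∧
    (∀ x y, E x u → SubsetE E x y → SubsetE E y κ → E y u) ∧
    (∀ x, SubsetE E x κ → (E x u ∨ ∃ c, IsRelCompl E κ x c ∧ E c u)) ∧
    (¬ ∃ x, E x u ∧ ∃ a, ∀ z, (E z x ↔ z = a)) ∧
    (∀ γ f, E γ κ → IsFuncOn E f γ → (∀ ξ v, FunApp E f ξ v → E v u) →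
      ∃ i, (∀ z, (E z i ↔ (E z κ ∧ ∀ ξ v, E ξ γ → FunApp E f ξ v → E z v))) ∧ E i u)

/-- `c` is the cofinality of `α`: the least ordinal admitting a map onto an
unbounded subset of `α`. -/
def HasCofinalMap (E : W → W → Prop) (α c : W) : Prop :=
  ∃ f, IsFuncOn E f c ∧ MapsInto E f α ∧
    ∀ β, E β α → ∃ u v, OPairMem E f u v ∧ (E β v ∨ β = v)

def IsCofinalityOf (E : W → W → Prop) (α c : W) : Prop :=
  IsOrd E c ∧ HasCofinalMap E α c ∧ ∀ c', E c' c → ¬ HasCofinalMap E α c'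

end Defs

section ZFSetDefs

/-- The elements of a `ZFSet`. -/
abbrev Elem (A : ZFSet) : Type 1 := {x : ZFSet // x ∈ A}

/-- The membership relation on the elements of a `ZFSet`. -/
def memOf (A : ZFSet) : Elem A → Elem A → Prop := fun a b => a.1 ∈ b.1

/-- `A` is a countable transitive set. -/
def CTS (A : ZFSet) : Prop := A.IsTransitive ∧ A.toSet.Countable

/-- `x` is a von Neumann ordinal. -/
def OrdZF (x : ZFSet) : Prop := x.IsTransitive ∧ ∀ y, y ∈ x → ZFSet.IsTransitive y

/-- `M` and `V` have the same ordinals. -/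
def SameOrdinals (M V : ZFSet) : Prop := ∀ x, OrdZF x → (x ∈ M ↔ x ∈ V)

/-- `M` and `V` have the same cardinals: an ordinal is a cardinal in `(M, ∈)` iff
it is one in `(V, ∈)`. -/
def SameCardinals (M V : ZFSet) : Prop :=
  ∀ (x : ZFSet) (hM : x ∈ M) (hV : x ∈ V),
    IsCardinal (memOf M) ⟨x, hM⟩ ↔ IsCardinal (memOf V) ⟨x, hV⟩

/-- `M` and `V` compute the same cofinalities. -/
def SameCofinalities (M V : ZFSet) : Prop :=
  ∀ (α c : ZFSet) (hαM : α ∈ M) (hcM : c ∈ M) (hαV : α ∈ V) (hcV : c ∈ V),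
    IsCofinalityOf (memOf M) ⟨α, hαM⟩ ⟨c, hcM⟩ ↔ IsCofinalityOf (memOf V) ⟨α, hαV⟩ ⟨c, hcV⟩

/-- `M` has unboundedly many cardinals. -/
def UnboundedCardinals (M : ZFSet) : Prop :=
  ∀ x : Elem M, ∃ c : Elem M, IsCardinal (memOf M) c ∧ memOf M x c

end ZFSetDefs
/-- The language with two binary relation symbols: `∈` and a symbol for an embedding `j`. -/
def setLang2 : FirstOrder.Language :=
  ⟨fun _ => Empty, fun n => match n with | 2 => Bool | _ => Empty⟩

/-- The `setLang2`-structure on `W` induced by binary relations `E` and `J`. -/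
def memStruc2 (W : Type*) (E J : W → W → Prop) : setLang2.Structure W where
  funMap := fun f _ => f.elim
  RelMap := fun {n} r xs =>
    match n, r, xs with
    | 2, true, xs => E (xs 0) (xs 1)
    | 2, false, xs => J (xs 0) (xs 1)

/-- Satisfaction of a formula in the language with `∈` and a predicate for `j`. -/
def Sat2 {W : Type*} (E J : W → W → Prop) {n : ℕ} (φ : setLang2.BoundedFormula Empty n)
    (xs : Fin n → W) : Prop :=
  @FirstOrder.Language.BoundedFormula.Realize setLang2 W (memStruc2 W E J) Empty n φ Empty.elim xs

section Defs2

variable {W : Type*}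

/-- The separation scheme for formulas in the language expanded by a symbol for `j`. -/
def SeparationScheme2 (E J : W → W → Prop) : Prop :=
  ∀ (n : ℕ) (φ : setLang2.BoundedFormula Empty (n + 1)) (p : Fin n → W) (a : W),
    ∃ b, ∀ z, (E z b ↔ (E z a ∧ Sat2 E J φ (Fin.snoc p z)))

/-- The collection scheme for formulas in the language expanded by a symbol for `j`. -/
def CollectionScheme2 (E J : W → W → Prop) : Prop :=
  ∀ (n : ℕ) (φ : setLang2.BoundedFormula Empty (n + 2)) (p : Fin n → W) (a : W),
    (∀ x, E x a → ∃ y, Sat2 E J φ (Fin.snoc (Fin.snoc p x) y)) →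
      ∃ b, ∀ x, E x a → ∃ y, E y b ∧ Sat2 E J φ (Fin.snoc (Fin.snoc p x) y)

/-- The set `γ^{<δ}` of all functions from ordinals below `δ` into `γ` exists. -/
def LtPowExists (E : W → W → Prop) (γ δ : W) : Prop :=
  ∃ s, ∀ f, (E f s ↔ ∃ α, E α δ ∧ IsFuncOn E f α ∧ MapsInto E f γ)

/-- The set `M` is closed under `<δ`-sequences (from the ambient model). -/
def ClosedUnderLtSeq (E : W → W → Prop) (δ M : W) : Prop :=
  ∀ f α, E α δ → IsFuncOn E f α → MapsInto E f M → E f M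

end Defs2

/-- `L₀ ⊨ ZFC + V = L`: `L₀` is a transitive ZFC-model that is contained in every
transitive ZFC-model with the same ordinals (the standard characterization of
transitive models of `V = L`). -/
def SatisfiesVeqL (L0 : ZFSet) : Prop :=
  ZFC' (memOf L0) ∧
  ∀ Z : ZFSet, Z.IsTransitive → ZFC' (memOf Z) → SameOrdinals Z L0 → L0 ⊆ Z

/-- The membership relation on the internal `V_{λ+1}` given by `v`. -/
def VRel (V : ZFSet) (v : Elem V) :
    {x : Elem V // memOf V x v} → {x : Elem V // memOf V x v} → Prop :=
  fun a b => memOf V a.1 b.1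

section Framework

open FirstOrder.Language

variable {W : Type*} (E : W → W → Prop)

/-- Relabeling of variable slots of a bounded formula over `Empty`. -/
lemma satRelabel {m m' : ℕ} (σ : Fin m → Fin m') (φ : setLang.BoundedFormula Empty m) :
    ∃ ψ : setLang.BoundedFormula Empty m', ∀ v : Fin m' → W, Sat E ψ v ↔ Sat E φ (v ∘ σ) := by
  classical
  letI : setLang.Structure W := memStruc W E
  refine ⟨BoundedFormula.relabel (β := Empty) (n := m')
      (fun x => x) (φ.toFormula.relabel (Sum.map id σ) : setLang.BoundedFormula (Empty ⊕ Fin m') 0), ?_⟩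
  intro v
  show BoundedFormula.Realize _ _ _ ↔ BoundedFormula.Realize _ _ _
  rw [BoundedFormula.realize_relabel,
    show (v ∘ Fin.natAdd m' : Fin 0 → W) = (default : Fin 0 → W) from Subsingleton.elim _ _]
  show Formula.Realize _ _ ↔ _
  rw [Formula.realize_relabel, BoundedFormula.realize_toFormula]
  exact Iff.of_eq (by congr 1)

/-- `R` is a definable `k`-ary relation (with parameters). -/
def DefN (k : ℕ) (R : (Fin k → W) → Prop) : Prop :=
  ∃ (n : ℕ) (φ : setLang.BoundedFormula Empty n) (ρ : Fin n → Fin k ⊕ W),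
    ∀ xs : Fin k → W, R xs ↔ Sat E φ (fun i => Sum.elim xs id (ρ i))

variable {E}

lemma DefN.congr {k : ℕ} {R R' : (Fin k → W) → Prop} (h : DefN E k R)
    (h' : ∀ xs, R' xs ↔ R xs) : DefN E k R' := by
  obtain ⟨n, φ, ρ, H⟩ := h
  exact ⟨n, φ, ρ, fun xs => (h' xs).trans (H xs)⟩

lemma defn_mem {k : ℕ} (i j : Fin k) : DefN E k (fun xs => E (xs i) (xs j)) := by
  letI : setLang.Structure W := memStruc W E
  refine ⟨2, Relations.boundedFormula₂ (()) (Term.var (Sum.inr 0)) (Term.var (Sum.inr 1)),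
    ![Sum.inl i, Sum.inl j], fun xs => ?_⟩
  show _ ↔ BoundedFormula.Realize _ _ _
  erw [BoundedFormula.realize_rel₂]
  simp [Term.realize, memStruc]
  exact Iff.rfl

lemma defn_eq {k : ℕ} (i j : Fin k) : DefN E k (fun xs => xs i = xs j) := by
  letI : setLang.Structure W := memStruc W E
  refine ⟨2, Term.bdEqual (Term.var (Sum.inr 0)) (Term.var (Sum.inr 1)),
    ![Sum.inl i, Sum.inl j], fun xs => ?_⟩
  show _ ↔ BoundedFormula.Realize _ _ _
  rw [BoundedFormula.realize_bdEqual]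
  simp [Term.realize]

lemma defn_false {k : ℕ} : DefN E k (fun _ => False) := by
  letI : setLang.Structure W := memStruc W E
  refine ⟨0, ⊥, Fin.elim0, fun xs => ?_⟩
  show _ ↔ BoundedFormula.Realize _ _ _
  simp

lemma defn_imp {k : ℕ} {R₁ R₂ : (Fin k → W) → Prop} (h₁ : DefN E k R₁) (h₂ : DefN E k R₂) :
    DefN E k (fun xs => R₁ xs → R₂ xs) := by
  letI : setLang.Structure W := memStruc W E
  obtain ⟨n₁, φ₁, ρ₁, H₁⟩ := h₁
  obtain ⟨n₂, φ₂, ρ₂, H₂⟩ := h₂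
  obtain ⟨ψ₁, Hψ₁⟩ := satRelabel E (Fin.castAdd n₂) φ₁
  obtain ⟨ψ₂, Hψ₂⟩ := satRelabel E (Fin.natAdd n₁) φ₂
  refine ⟨n₁ + n₂, ψ₁.imp ψ₂, Fin.addCases ρ₁ ρ₂, fun xs => ?_⟩
  set v : Fin (n₁ + n₂) → W := fun i => Sum.elim xs id (Fin.addCases ρ₁ ρ₂ i) with hv
  have e1 : (v ∘ Fin.castAdd n₂) = fun i => Sum.elim xs id (ρ₁ i) := by
    funext t; simp [hv, Function.comp, Fin.addCases_left]
  have e2 : (v ∘ Fin.natAdd n₁) = fun i => Sum.elim xs id (ρ₂ i) := by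
    funext t; simp [hv, Function.comp, Fin.addCases_right]
  have A1 : Sat E ψ₁ v ↔ R₁ xs := by rw [Hψ₁ v, e1]; exact (H₁ xs).symm
  have A2 : Sat E ψ₂ v ↔ R₂ xs := by rw [Hψ₂ v, e2]; exact (H₂ xs).symm
  show _ ↔ BoundedFormula.Realize _ _ _
  rw [BoundedFormula.realize_imp]
  exact Iff.symm (imp_congr A1 A2)

lemma defn_not {k : ℕ} {R : (Fin k → W) → Prop} (h : DefN E k R) :
    DefN E k (fun xs => ¬ R xs) :=
  (defn_imp h defn_false).congr (fun xs => by tauto)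

lemma defn_and {k : ℕ} {R₁ R₂ : (Fin k → W) → Prop} (h₁ : DefN E k R₁) (h₂ : DefN E k R₂) :
    DefN E k (fun xs => R₁ xs ∧ R₂ xs) :=
  (defn_not (defn_imp h₁ (defn_not h₂))).congr (fun xs => by tauto)

lemma defn_or {k : ℕ} {R₁ R₂ : (Fin k → W) → Prop} (h₁ : DefN E k R₁) (h₂ : DefN E k R₂) :
    DefN E k (fun xs => R₁ xs ∨ R₂ xs) :=
  (defn_imp (defn_not h₁) h₂).congr (fun xs => by tauto)

lemma defn_iff {k : ℕ} {R₁ R₂ : (Fin k → W) → Prop} (h₁ : DefN E k R₁) (h₂ : DefN E k R₂) :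
    DefN E k (fun xs => R₁ xs ↔ R₂ xs) :=
  (defn_and (defn_imp h₁ h₂) (defn_imp h₂ h₁)).congr (fun xs => by tauto)

lemma snoc_of_lt {β : Type*} {n : ℕ} (x : Fin n → β) (a : β) (i : Fin (n+1)) (h : (i : ℕ) < n) :
    (Fin.snoc x a : Fin (n+1) → β) i = x ⟨i.1, h⟩ := by
  simp [Fin.snoc, h, Fin.castLT]

lemma snoc_of_nlt {β : Type*} {n : ℕ} (x : Fin n → β) (a : β) (i : Fin (n+1)) (h : ¬ (i : ℕ) < n) :
    (Fin.snoc x a : Fin (n+1) → β) i = a := by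
  simp [Fin.snoc, h]

lemma defn_all [Nonempty W] {k : ℕ} {R : (Fin (k+1) → W) → Prop} (h : DefN E (k+1) R) :
    DefN E k (fun xs => ∀ y, R (Fin.snoc xs y)) := by
  classical
  letI : setLang.Structure W := memStruc W E
  obtain ⟨n, φ, ρ, H⟩ := h
  set σ : Fin n → Fin (n+1) := fun t =>
    match ρ t with
    | Sum.inl j => if (j : ℕ) < k then Fin.castSucc t else Fin.last n
    | Sum.inr _ => Fin.castSucc t with hσ
  obtain ⟨ψ, Hψ⟩ := satRelabel E σ φ
  set ρ' : Fin n → Fin k ⊕ W := fun t =>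
    match ρ t with
    | Sum.inl j => if h : (j : ℕ) < k then Sum.inl ⟨j.1, h⟩ else Sum.inr (Classical.arbitrary W)
    | Sum.inr w => Sum.inr w with hρ'
  refine ⟨n, ψ.all, ρ', fun xs => ?_⟩
  set v : Fin n → W := fun i => Sum.elim xs id (ρ' i) with hv
  show _ ↔ BoundedFormula.Realize _ _ _
  rw [BoundedFormula.realize_all]
  apply forall_congr'
  intro a
  rw [H (Fin.snoc xs a)]
  have hval : ((Fin.snoc v a : Fin (n+1) → W) ∘ σ) = fun t => Sum.elim (Fin.snoc xs a) id (ρ t) := by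
    funext t
    rcases ht : ρ t with j | w
    · by_cases hj : (j : ℕ) < k
      · have hv1 : v t = xs ⟨j.1, hj⟩ := by simp [hv, hρ', ht, hj]
        simp only [Function.comp, hσ, ht, if_pos hj, Fin.snoc_castSucc, hv1, Sum.elim_inl]
        rw [snoc_of_lt xs a j hj]
      · simp only [Function.comp, hσ, ht, if_neg hj, Fin.snoc_last, Sum.elim_inl]
        rw [snoc_of_nlt xs a j hj]
    · have hv1 : v t = w := by simp [hv, hρ', ht]
      simp only [Function.comp, hσ, ht, Fin.snoc_castSucc, hv1, Sum.elim_inr, id_eq]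
  have := (Hψ (Fin.snoc v a)).trans (by rw [hval])
  exact this.symm

lemma defn_ex [Nonempty W] {k : ℕ} {R : (Fin (k+1) → W) → Prop} (h : DefN E (k+1) R) :
    DefN E k (fun xs => ∃ y, R (Fin.snoc xs y)) := by
  classical
  have := defn_not (defn_all (defn_not h))
  exact this.congr (fun xs => by
    simp only [not_forall, not_not])


lemma defn_comp {k k' : ℕ} (σ : Fin k → Fin k') {R : (Fin k → W) → Prop} (h : DefN E k R) :
    DefN E k' (fun xs => R (fun j => xs (σ j))) := by
  obtain ⟨n, φ, ρ, H⟩ := h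
  refine ⟨n, φ, fun t => Sum.map σ id (ρ t), fun xs => ?_⟩
  show R _ ↔ _
  rw [H]
  apply Iff.of_eq; apply congrArg
  funext t
  rcases ht : ρ t with j | w <;> simp [ht]

lemma defn_substConst {k : ℕ} (a : W) {R : (Fin (k+1) → W) → Prop} (h : DefN E (k+1) R) :
    DefN E k (fun xs => R (Fin.snoc xs a)) := by
  classical
  obtain ⟨n, φ, ρ, H⟩ := h
  refine ⟨n, φ, fun t => match ρ t with
    | Sum.inl j => if h : (j : ℕ) < k then Sum.inl ⟨j.1, h⟩ else Sum.inr a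
    | Sum.inr w => Sum.inr w, fun xs => ?_⟩
  show R _ ↔ _
  rw [H]
  apply Iff.of_eq; apply congrArg
  funext t
  rcases ht : ρ t with j | w
  · by_cases hj : (j : ℕ) < k
    · simp only [ht, dif_pos hj, Sum.elim_inl]
      rw [snoc_of_lt xs a j hj]
    · simp only [ht, dif_neg hj, Sum.elim_inl, Sum.elim_inr, id_eq]
      rw [snoc_of_nlt xs a j hj]
  · simp only [ht, Sum.elim_inr]

/-- Bridge: a definable unary predicate in the `snoc` form used by the schemes. -/
lemma defn_to_snoc1 [Nonempty W] {Q : (Fin 1 → W) → Prop} (h : DefN E 1 Q) :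
    ∃ (n : ℕ) (ψ : setLang.BoundedFormula Empty (n+1)) (p : Fin n → W),
      ∀ x : W, Q ![x] ↔ Sat E ψ (Fin.snoc p x) := by
  classical
  obtain ⟨n, φ, ρ, H⟩ := h
  set σ : Fin n → Fin (n+1) := fun t =>
    match ρ t with
    | Sum.inl _ => Fin.last n
    | Sum.inr _ => Fin.castSucc t with hσ
  obtain ⟨ψ, Hψ⟩ := satRelabel E σ φ
  refine ⟨n, ψ, fun t => Sum.elim (fun _ => Classical.arbitrary W) id (ρ t), fun x => ?_⟩
  rw [H ![x], Hψ]
  apply Iff.of_eq; apply congrArg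
  funext t
  rcases ht : ρ t with j | w
  · have : j = 0 := Subsingleton.elim _ _
    subst this
    simp only [Function.comp, hσ, ht, Fin.snoc_last, Sum.elim_inl]
    rfl
  · simp only [Function.comp, hσ, ht, Fin.snoc_castSucc, Sum.elim_inr, id_eq]

/-- Bridge: a definable binary predicate in the double-`snoc` form used by the schemes. -/
lemma defn_to_snoc2 [Nonempty W] {R : (Fin 2 → W) → Prop} (h : DefN E 2 R) :
    ∃ (n : ℕ) (ψ : setLang.BoundedFormula Empty (n+2)) (p : Fin n → W),
      ∀ x y : W, R ![x, y] ↔ Sat E ψ (Fin.snoc (Fin.snoc p x) y) := by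
  classical
  obtain ⟨n, φ, ρ, H⟩ := h
  set σ : Fin n → Fin (n+2) := fun t =>
    match ρ t with
    | Sum.inl j => if (j : ℕ) = 0 then Fin.castSucc (Fin.last n) else Fin.last (n+1)
    | Sum.inr _ => Fin.castSucc (Fin.castSucc t) with hσ
  obtain ⟨ψ, Hψ⟩ := satRelabel E σ φ
  refine ⟨n, ψ, fun t => Sum.elim (fun _ => Classical.arbitrary W) id (ρ t), fun x y => ?_⟩
  rw [H ![x, y], Hψ]
  apply Iff.of_eq; apply congrArg
  funext t
  rcases ht : ρ t with j | w
  · by_cases hj : (j : ℕ) = 0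
    · simp only [Function.comp, hσ, ht, if_pos hj, Fin.snoc_castSucc, Fin.snoc_last, Sum.elim_inl]
      have : j = 0 := Fin.ext hj
      subst this; rfl
    · simp only [Function.comp, hσ, ht, if_neg hj, Fin.snoc_last, Sum.elim_inl]
      have : j = 1 := Fin.ext (by have := j.isLt; omega)
      subst this
      simp [Fin.last]
  · simp [Function.comp, hσ, ht, Fin.snoc_castSucc]

/-- Separation for definable predicates. -/
lemma sepD [Nonempty W] (hsep : SeparationScheme E) {Q : (Fin 1 → W) → Prop}
    (h : DefN E 1 Q) (a : W) : ∃ b, ∀ z, E z b ↔ (E z a ∧ Q ![z]) := by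
  obtain ⟨n, ψ, p, H⟩ := defn_to_snoc1 h
  obtain ⟨b, hb⟩ := hsep n ψ p a
  exact ⟨b, fun z => (hb z).trans (by rw [H z])⟩

/-- Foundation for definable predicates. -/
lemma foundD [Nonempty W] (hf : FoundationScheme E) {Q : (Fin 1 → W) → Prop}
    (h : DefN E 1 Q) (hne : ∃ x, Q ![x]) :
    ∃ x, Q ![x] ∧ ∀ y, E y x → ¬ Q ![y] := by
  obtain ⟨n, ψ, p, H⟩ := defn_to_snoc1 h
  obtain ⟨x, hx1, hx2⟩ := hf n ψ p (by obtain ⟨x, hx⟩ := hne; exact ⟨x, (H x).mp hx⟩)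
  exact ⟨x, (H x).mpr hx1, fun y hy hQ => hx2 y hy ((H y).mp hQ)⟩

/-- Collection for definable relations. -/
lemma collD [Nonempty W] (hc : CollectionScheme E) {R : (Fin 2 → W) → Prop}
    (h : DefN E 2 R) (a : W) (tot : ∀ x, E x a → ∃ y, R ![x, y]) :
    ∃ b, ∀ x, E x a → ∃ y, E y b ∧ R ![x, y] := by
  obtain ⟨n, ψ, p, H⟩ := defn_to_snoc2 h
  obtain ⟨b, hb⟩ := hc n ψ p a (fun x hx => by
    obtain ⟨y, hy⟩ := tot x hx; exact ⟨y, (H x y).mp hy⟩)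
  exact ⟨b, fun x hx => by
    obtain ⟨y, hy1, hy2⟩ := hb x hx; exact ⟨y, hy1, (H x y).mpr hy2⟩⟩

/-- `DC_δ` for definable relations. -/
lemma dcD [Nonempty W] {δ : W} (hdc : DCScheme E δ) {R : (Fin 2 → W) → Prop}
    (h : DefN E 2 R) (tot : ∀ x, ∃ y, R ![x, y]) :
    ∃ f, IsFuncOn E f δ ∧ ∀ ξ, E ξ δ → ∃ g v, IsRestrictionOf E f ξ g ∧ FunApp E f ξ v ∧
      R ![g, v] := by
  obtain ⟨n, ψ, p, H⟩ := defn_to_snoc2 h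
  obtain ⟨f, hf1, hf2⟩ := hdc n ψ p (fun x => by
    obtain ⟨y, hy⟩ := tot x; exact ⟨y, (H x y).mp hy⟩)
  refine ⟨f, hf1, fun ξ hξ => ?_⟩
  obtain ⟨g, v, h1, h2, h3⟩ := hf2 ξ hξ
  exact ⟨g, v, h1, h2, (H g v).mpr h3⟩


end Framework

section SnocEval

variable {β : Type*}

@[simp] lemma snoc2_0 (xs : Fin 1 → β) (y : β) : (Fin.snoc xs y : Fin 2 → β) 0 = xs 0 := rfl
@[simp] lemma snoc2_1 (xs : Fin 1 → β) (y : β) : (Fin.snoc xs y : Fin 2 → β) 1 = y := rfl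
@[simp] lemma snoc3_0 (xs : Fin 2 → β) (y : β) : (Fin.snoc xs y : Fin 3 → β) 0 = xs 0 := rfl
@[simp] lemma snoc3_1 (xs : Fin 2 → β) (y : β) : (Fin.snoc xs y : Fin 3 → β) 1 = xs 1 := rfl
@[simp] lemma snoc3_2 (xs : Fin 2 → β) (y : β) : (Fin.snoc xs y : Fin 3 → β) 2 = y := rfl
@[simp] lemma snoc4_0 (xs : Fin 3 → β) (y : β) : (Fin.snoc xs y : Fin 4 → β) 0 = xs 0 := rfl
@[simp] lemma snoc4_1 (xs : Fin 3 → β) (y : β) : (Fin.snoc xs y : Fin 4 → β) 1 = xs 1 := rfl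
@[simp] lemma snoc4_2 (xs : Fin 3 → β) (y : β) : (Fin.snoc xs y : Fin 4 → β) 2 = xs 2 := rfl
@[simp] lemma snoc4_3 (xs : Fin 3 → β) (y : β) : (Fin.snoc xs y : Fin 4 → β) 3 = y := rfl
@[simp] lemma snoc5_0 (xs : Fin 4 → β) (y : β) : (Fin.snoc xs y : Fin 5 → β) 0 = xs 0 := rfl
@[simp] lemma snoc5_1 (xs : Fin 4 → β) (y : β) : (Fin.snoc xs y : Fin 5 → β) 1 = xs 1 := rfl
@[simp] lemma snoc5_2 (xs : Fin 4 → β) (y : β) : (Fin.snoc xs y : Fin 5 → β) 2 = xs 2 := rfl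
@[simp] lemma snoc5_3 (xs : Fin 4 → β) (y : β) : (Fin.snoc xs y : Fin 5 → β) 3 = xs 3 := rfl
@[simp] lemma snoc5_4 (xs : Fin 4 → β) (y : β) : (Fin.snoc xs y : Fin 5 → β) 4 = y := rfl

end SnocEval

section Definable

open FirstOrder.Language

variable {W : Type*} {E : W → W → Prop} [Nonempty W]

lemma defn_isUPair {k : ℕ} (i j l : Fin k) :
    DefN E k (fun xs => IsUPair E (xs i) (xs j) (xs l)) := by
  have h := defn_all (defn_iff (defn_mem (E := E) (Fin.last k) (Fin.castSucc l))
    (defn_or (defn_eq (E := E) (Fin.last k) (Fin.castSucc i))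
      (defn_eq (E := E) (Fin.last k) (Fin.castSucc j))))
  exact h.congr (fun xs => by simp [IsUPair, Fin.snoc_castSucc, Fin.snoc_last])

lemma defn_isOPair {k : ℕ} (i j l : Fin k) :
    DefN E k (fun xs => IsOPair E (xs i) (xs j) (xs l)) := by
  have h := defn_ex (defn_ex (defn_and
    (defn_isUPair (E := E) (Fin.castSucc (Fin.castSucc i)) (Fin.castSucc (Fin.castSucc i))
      (Fin.castSucc (Fin.last k)))
    (defn_and
      (defn_isUPair (E := E) (Fin.castSucc (Fin.castSucc i)) (Fin.castSucc (Fin.castSucc j))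
        (Fin.last (k+1)))
      (defn_isUPair (E := E) (Fin.castSucc (Fin.last k)) (Fin.last (k+1))
        (Fin.castSucc (Fin.castSucc l))))))
  exact h.congr (fun xs => by simp [IsOPair, Fin.snoc_castSucc, Fin.snoc_last])

lemma defn_opm {k : ℕ} (fi ui vi : Fin k) :
    DefN E k (fun xs => OPairMem E (xs fi) (xs ui) (xs vi)) := by
  have h := defn_ex (defn_and (defn_mem (E := E) (Fin.last k) (Fin.castSucc fi))
    (defn_isOPair (E := E) (Fin.castSucc ui) (Fin.castSucc vi) (Fin.last k)))
  exact h.congr (fun xs => by simp [OPairMem, Fin.snoc_castSucc, Fin.snoc_last])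

lemma defn_mem_constR {k : ℕ} (c : W) (i : Fin k) : DefN E k (fun xs => E (xs i) c) := by
  have h := defn_substConst c (defn_mem (E := E) (Fin.castSucc i) (Fin.last k))
  exact h.congr (fun xs => by simp [Fin.snoc_castSucc, Fin.snoc_last])

lemma defn_mem_constL {k : ℕ} (c : W) (i : Fin k) : DefN E k (fun xs => E c (xs i)) := by
  have h := defn_substConst c (defn_mem (E := E) (Fin.last k) (Fin.castSucc i))
  exact h.congr (fun xs => by simp [Fin.snoc_castSucc, Fin.snoc_last])

lemma defn_eq_const {k : ℕ} (i : Fin k) (c : W) : DefN E k (fun xs => xs i = c) := by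
  have h := defn_substConst c (defn_eq (E := E) (Fin.castSucc i) (Fin.last k))
  exact h.congr (fun xs => by simp [Fin.snoc_castSucc, Fin.snoc_last])

lemma defn_opm_const {k : ℕ} (F : W) (ui vi : Fin k) :
    DefN E k (fun xs => OPairMem E F (xs ui) (xs vi)) := by
  have h := defn_substConst F (defn_opm (E := E) (Fin.last k) (Fin.castSucc ui) (Fin.castSucc vi))
  exact h.congr (fun xs => by simp [Fin.snoc_castSucc, Fin.snoc_last])

lemma defn_ofClass {C : Set W}
    (h : ∃ (n : ℕ) (φ : setLang.BoundedFormula Empty (n + 1)) (p : Fin n → W),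
      C = ClassOf E φ p) {k : ℕ} (i : Fin k) : DefN E k (fun xs => xs i ∈ C) := by
  classical
  obtain ⟨n, φ, p, rfl⟩ := h
  have base : DefN E 1 (fun xs => xs 0 ∈ ClassOf E φ p) := by
    refine ⟨n + 1, φ, fun t => if ht : (t : ℕ) < n then Sum.inr (p ⟨t.1, ht⟩) else Sum.inl 0,
      fun xs => ?_⟩
    show Sat E φ (Fin.snoc p (xs 0)) ↔ _
    apply Iff.of_eq; apply congrArg
    funext t
    by_cases ht : (t : ℕ) < n
    · rw [snoc_of_lt p (xs 0) t ht]; simp [ht]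
    · rw [snoc_of_nlt p (xs 0) t ht]; simp [ht]
  have := defn_comp (fun _ : Fin 1 => i) base
  exact this.congr (fun xs => Iff.rfl)

lemma defn_ofRel {r : W → W → Prop}
    (h : ∃ (n : ℕ) (φ : setLang.BoundedFormula Empty (n + 2)) (p : Fin n → W),
      ∀ x y, r x y ↔ Sat E φ (Fin.snoc (Fin.snoc p x) y)) {k : ℕ} (i j : Fin k) :
    DefN E k (fun xs => r (xs i) (xs j)) := by
  classical
  obtain ⟨n, φ, p, H⟩ := h
  have base : DefN E 2 (fun xs => r (xs 0) (xs 1)) := by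
    refine ⟨n + 2, φ, fun t =>
      if ht : (t : ℕ) < n then Sum.inr (p ⟨t.1, ht⟩)
      else if (t : ℕ) = n then Sum.inl 0 else Sum.inl 1, fun xs => ?_⟩
    show r (xs 0) (xs 1) ↔ _
    rw [H (xs 0) (xs 1)]
    apply Iff.of_eq; apply congrArg
    funext t
    by_cases ht : (t : ℕ) < n + 1
    · rw [snoc_of_lt (Fin.snoc p (xs 0)) (xs 1) t ht]
      by_cases ht2 : (t : ℕ) < n
      · rw [snoc_of_lt p (xs 0) ⟨t.1, ht⟩ ht2]; simp [ht2]
      · rw [snoc_of_nlt p (xs 0) ⟨t.1, ht⟩ ht2]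
        have : (t : ℕ) = n := by omega
        simp [ht2, this]
    · rw [snoc_of_nlt (Fin.snoc p (xs 0)) (xs 1) t ht]
      have h1 : ¬ (t : ℕ) < n := by omega
      have h2 : ¬ (t : ℕ) = n := by omega
      simp [h1, h2]
  have := defn_comp (fun t : Fin 2 => if t = 0 then i else j) base
  exact this.congr (fun xs => Iff.rfl)

end Definable

section Internal

open FirstOrder.Language

variable {W : Type*} {E : W → W → Prop}

lemma opair_exists (hp : PairingAx E) (a b : W) : ∃ p, IsOPair E a b p := by
  obtain ⟨s, hs⟩ := hp a a
  obtain ⟨t, ht⟩ := hp a b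
  obtain ⟨p, hpp⟩ := hp s t
  exact ⟨p, s, t, hs, ht, hpp⟩

lemma opair_inj {a b p a' b' : W} (h : IsOPair E a b p) (h' : IsOPair E a' b' p) :
    a = a' ∧ b = b' := by
  obtain ⟨s, t, hs, ht, hst⟩ := h
  obtain ⟨s', t', hs', ht', hst'⟩ := h'
  have hs1 : ∀ z, E z s → z = a := fun z hz => ((hs z).1 hz).elim id id
  have ht1 : ∀ z, E z t → z = a ∨ z = b := fun z hz => (ht z).1 hz
  have hs1' : ∀ z, E z s' → z = a' := fun z hz => ((hs' z).1 hz).elim id id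
  have ht1' : ∀ z, E z t' → z = a' ∨ z = b' := fun z hz => (ht' z).1 hz
  have has : E a s := (hs a).2 (Or.inl rfl)
  have hbt : E b t := (ht b).2 (Or.inr rfl)
  have ha't' : E a' t' := (ht' a').2 (Or.inl rfl)
  have hb't' : E b' t' := (ht' b').2 (Or.inr rfl)
  have hsp : E s p := (hst s).2 (Or.inl rfl)
  have htp : E t p := (hst t).2 (Or.inr rfl)
  have ht'p : E t' p := (hst' t').2 (Or.inr rfl)
  have haa : a = a' := by
    rcases (hst' s).1 hsp with rfl | rfl
    · exact hs1' a has
    · exact (hs1 a' ha't').symm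
  subst haa
  refine ⟨rfl, ?_⟩
  rcases (hst' t).1 htp with rfl | rfl
  · -- t = s'
    have hba : b = a := hs1' b hbt
    rcases (hst t').1 ht'p with rfl | rfl
    · exact hba.trans (hs1 b' hb't').symm
    · rcases ht1 b' hb't' with h2 | h2
      · exact hba.trans h2.symm
      · exact h2.symm
  · -- t = t'
    rcases ht1' b hbt with hba | h2
    · rcases ht1 b' hb't' with h2 | h2
      · exact hba.trans h2.symm
      · exact h2.symm
    · exact h2

variable [Nonempty W]

lemma no_cycle1 (hf : FoundationScheme E) (a : W) : ¬ E a a := by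
  intro haa
  obtain ⟨x, hx, hmin⟩ := foundD hf (defn_eq_const (E := E) 0 a) ⟨a, rfl⟩
  simp only [Matrix.cons_val_zero] at hx hmin
  exact hmin a (by rw [hx]; exact haa) rfl

lemma no_cycle2 (hf : FoundationScheme E) {a b : W} (hab : E a b) (hba : E b a) : False := by
  obtain ⟨x, hx, hmin⟩ := foundD hf
    (defn_or (defn_eq_const (E := E) 0 a) (defn_eq_const (E := E) 0 b)) ⟨a, Or.inl rfl⟩
  simp only [Matrix.cons_val_zero] at hx hmin
  rcases hx with rfl | rfl
  · exact hmin b hba (Or.inr rfl)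
  · exact hmin a hab (Or.inl rfl)

lemma no_cycle3 (hf : FoundationScheme E) {a b c : W} (hab : E a b) (hbc : E b c)
    (hca : E c a) : False := by
  obtain ⟨x, hx, hmin⟩ := foundD hf
    (defn_or (defn_eq_const (E := E) 0 a)
      (defn_or (defn_eq_const (E := E) 0 b) (defn_eq_const (E := E) 0 c)))
    ⟨a, Or.inl rfl⟩
  simp only [Matrix.cons_val_zero] at hx hmin
  rcases hx with rfl | rfl | rfl
  · exact hmin c hca (Or.inr (Or.inr rfl))
  · exact hmin a hab (Or.inl rfl)
  · exact hmin b hbc (Or.inr (Or.inl rfl))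

lemma ord_mem_ord (hf : FoundationScheme E) {d x : W} (hd : IsOrd E d) (hx : E x d) :
    IsOrd E x := by
  obtain ⟨htr, hlin⟩ := hd
  constructor
  · intro y hy z hz
    have hyd : E y d := htr x hx y hy
    have hzd : E z d := htr y hyd z hz
    rcases hlin z x hzd hx with h | h | h
    · exact h
    · exact (no_cycle2 hf (h ▸ hz) hy).elim
    · exact (no_cycle3 hf hy h hz).elim
  · intro u v hu hv
    exact hlin u v (htr x hx u hu) (htr x hx v hv)

/-- Make a set function on `d` from a definable functional total relation. -/
lemma mkFun (hp : PairingAx E) (hsep : SeparationScheme E) (hcol : CollectionScheme E)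
    {R : W → W → Prop} (hR : DefN E 2 (fun xs => R (xs 0) (xs 1))) (d : W)
    (tot : ∀ x, E x d → ∃ y, R x y) (fnal : ∀ x y y', R x y → R x y' → y = y') :
    ∃ F, IsFuncOn E F d ∧ ∀ u v, OPairMem E F u v ↔ (E u d ∧ R u v) := by
  classical
  set R' : W → W → Prop := fun x p => ∃ v, R x v ∧ IsOPair E x v p with hR'def
  have hRR : DefN E 3 (fun xs => R (xs 0) (xs 2)) := by
    have := defn_comp (fun t : Fin 2 => if t = 0 then (0 : Fin 3) else 2) hR
    exact this.congr (fun xs => Iff.rfl)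
  have hR' : DefN E 2 (fun xs => R' (xs 0) (xs 1)) := by
    have := defn_ex (defn_and hRR (defn_isOPair (E := E) (k := 3) 0 2 1))
    exact this.congr (fun xs => by
      simp only [hR'def]
      constructor
      · rintro ⟨v, h1, h2⟩; exact ⟨v, by simpa using h1, by simpa using h2⟩
      · rintro ⟨v, h1, h2⟩; exact ⟨v, by simpa using h1, by simpa using h2⟩)
  obtain ⟨b, hb⟩ := collD hcol hR' d (fun x hx => by
    obtain ⟨y, hy⟩ := tot x hx
    obtain ⟨p, hp'⟩ := opair_exists hp x y
    exact ⟨p, by simpa using ⟨y, hy, hp'⟩⟩)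
  have hQ : DefN E 1 (fun xs => ∃ x, E x d ∧ R' x (xs 0)) := by
    have := defn_ex (defn_and (defn_mem_constR (E := E) (k := 2) d 1)
      ((defn_comp (fun t : Fin 2 => if t = 0 then (1 : Fin 2) else 0) hR').congr
        (fun xs => Iff.rfl)))
    exact this.congr (fun xs => by
      constructor
      · rintro ⟨x, h1, h2⟩; exact ⟨x, by simpa using h1, by simpa using h2⟩
      · rintro ⟨x, h1, h2⟩; exact ⟨x, by simpa using h1, by simpa using h2⟩)
  obtain ⟨F, hF⟩ := sepD hsep hQ b
  have char : ∀ u v, OPairMem E F u v ↔ (E u d ∧ R u v) := by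
    intro u v
    constructor
    · rintro ⟨q, hqF, hop⟩
      obtain ⟨hqb, x, hxd, v', hv', hop'⟩ := by simpa using (hF q).1 hqF
      obtain ⟨e1, e2⟩ := opair_inj hop hop'
      subst e1; subst e2
      exact ⟨hxd, hv'⟩
    · rintro ⟨hud, hruv⟩
      obtain ⟨q, hqb, hR'q⟩ := hb u hud
      obtain ⟨v', hv', hop'⟩ := by simpa using hR'q
      have : v' = v := fnal u v' v hv' hruv
      subst this
      refine ⟨q, (hF q).2 ⟨hqb, ?_⟩, hop'⟩
      simpa using ⟨u, hud, v', hv', hop'⟩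
  refine ⟨F, ⟨?_, ?_, ?_⟩, char⟩
  · intro q hqF
    obtain ⟨hqb, x, hxd, v', hv', hop'⟩ := by simpa using (hF q).1 hqF
    exact ⟨x, v', hxd, hop'⟩
  · intro u hud
    obtain ⟨y, hy⟩ := tot u hud
    exact ⟨y, (char u y).2 ⟨hud, hy⟩⟩
  · intro u v v' h1 h2
    exact fnal u v v' ((char u v).1 h1).2 ((char u v').1 h2).2

/-- The range of a set function (on a given domain) is a set. -/
lemma rangeSet (hun : UnionAx E) (hsep : SeparationScheme E) (f dom : W) :
    ∃ A, ∀ v, E v A ↔ ∃ u, E u dom ∧ OPairMem E f u v := by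
  obtain ⟨U1, hU1⟩ := hun f
  obtain ⟨U2, hU2⟩ := hun U1
  have hQ : DefN E 1 (fun xs => ∃ u, E u dom ∧ OPairMem E f u (xs 0)) := by
    have := defn_ex (defn_and (defn_mem_constR (E := E) (k := 2) dom 1)
      (defn_opm_const (E := E) (k := 2) f 1 0))
    exact this.congr (fun xs => by
      constructor
      · rintro ⟨u, h1, h2⟩; exact ⟨u, by simpa using h1, by simpa using h2⟩
      · rintro ⟨u, h1, h2⟩; exact ⟨u, by simpa using h1, by simpa using h2⟩)
  obtain ⟨A, hA⟩ := sepD hsep hQ U2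
  refine ⟨A, fun v => ?_⟩
  rw [hA v]
  simp only [Matrix.cons_val_zero]
  constructor
  · rintro ⟨_, h⟩; exact h
  · rintro ⟨u, hud, q, hqf, s, t, hs, ht, hst⟩
    refine ⟨?_, u, hud, q, hqf, s, t, hs, ht, hst⟩
    have htq : E t q := (hst t).2 (Or.inr rfl)
    have hvt : E v t := (ht v).2 (Or.inr rfl)
    exact (hU2 v).2 ⟨t, (hU1 t).2 ⟨q, hqf, htq⟩, hvt⟩

/-- Restrictions of sets to a domain exist. -/
lemma restr_exists (hsep : SeparationScheme E) (f ξ : W) : ∃ g, IsRestrictionOf E f ξ g := by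
  have hQ : DefN E 1 (fun xs => ∃ u v, E u ξ ∧ IsOPair E u v (xs 0)) := by
    have := defn_ex (defn_ex (defn_and (defn_mem_constR (E := E) (k := 3) ξ 1)
      (defn_isOPair (E := E) (k := 3) 1 2 0)))
    exact this.congr (fun xs => by
      constructor
      · rintro ⟨u, v, h1, h2⟩; exact ⟨u, v, by simpa using h1, by simpa using h2⟩
      · rintro ⟨u, v, h1, h2⟩; exact ⟨u, v, by simpa using h1, by simpa using h2⟩)
  obtain ⟨g, hg⟩ := sepD hsep hQ f
  exact ⟨g, fun q => (hg q).trans (by simp)⟩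

lemma restr_opm {f ξ g u v : W} (hg : IsRestrictionOf E f ξ g) :
    OPairMem E g u v ↔ (E u ξ ∧ OPairMem E f u v) := by
  constructor
  · rintro ⟨q, hqg, hop⟩
    obtain ⟨hqf, u', v', hu', hop'⟩ := (hg q).1 hqg
    obtain ⟨e1, e2⟩ := opair_inj hop' hop
    subst e1; subst e2
    exact ⟨hu', q, hqf, hop⟩
  · rintro ⟨hu, q, hqf, hop⟩
    exact ⟨q, (hg q).2 ⟨hqf, u, v, hu, hop⟩, hop⟩

end Internal

/-- Over ZFC⁻ with the DC_δ-scheme for a regular cardinal `δ`, every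
class partial order `P` with the `δ`-chain condition has, inside each dense
subclass, a set-sized maximal antichain. -/
theorem denseClass_contains_set_maximal_antichain {W : Type*} (E : W → W → Prop)
    (hW : ZFCminus E) (δ : W) (hδ : IsRegular' E δ) (hDC : DCScheme E δ)
    (P : Set W) (le : W → W → Prop)
    (hPdef : ∃ (n : ℕ) (φ : setLang.BoundedFormula Empty (n + 1)) (p : Fin n → W),
      P = ClassOf E φ p)
    (hledef : ∃ (n : ℕ) (φ : setLang.BoundedFormula Empty (n + 2)) (p : Fin n → W),
      ∀ x y, le x y ↔ Sat E φ (Fin.snoc (Fin.snoc p x) y))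
    (hrefl : ∀ x ∈ P, le x x)
    (htrans : ∀ x y z, x ∈ P → y ∈ P → z ∈ P → le x y → le y z → le x z)
    (hantisymm : ∀ x y, x ∈ P → y ∈ P → le x y → le y x → x = y)
    (hcc : ∀ A : W, (∀ u, E u A → u ∈ P) →
      (∀ u v, E u A → E v A → u ≠ v → ¬ ∃ w, w ∈ P ∧ le w u ∧ le w v) →
      ∃ γ, E γ δ ∧ ∃ f, IntInj E f A γ) :
    ∀ D : Set W,
      (∃ (n : ℕ) (φ : setLang.BoundedFormula Empty (n + 1)) (p : Fin n → W),
        D = ClassOf E φ p) →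
      D ⊆ P → (∀ x ∈ P, ∃ y ∈ D, le y x) →
      ∃ A : W, (∀ u, E u A → u ∈ D) ∧
        (∀ u v, E u A → E v A → u ≠ v → ¬ ∃ w, w ∈ P ∧ le w u ∧ le w v) ∧
        (∀ x ∈ P, ∃ u, E u A ∧ ∃ w, w ∈ P ∧ le w x ∧ le w u) := by
  classical
  intro D hDdef hDP hdens
  obtain ⟨hext, hempty, hpair, hunion, hinf, hfound, hsep, hcoll, hwo⟩ := hW
  obtain ⟨e0, he0⟩ := hempty
  haveI : Nonempty W := ⟨e0⟩
  obtain ⟨⟨hδord, hδcard⟩, hδreg⟩ := hδ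
  -- Abbreviations (as plain lambdas)
  -- Compat p v := ∃ w, w ∈ P ∧ le w p ∧ le w v
  -- Bad x := ∃ p, p ∈ P ∧ ∀ v, (∃ u, OPairMem E x u v) → ¬ ∃ w, w ∈ P ∧ le w p ∧ le w v
  -- Definability of the pieces
  have dCompat : ∀ {k : ℕ} (i j : Fin k),
      DefN E k (fun xs => ∃ w, w ∈ P ∧ le w (xs i) ∧ le w (xs j)) := by
    intro k i j
    have := defn_ex (defn_and (defn_ofClass hPdef (Fin.last k))
      (defn_and (defn_ofRel hledef (Fin.last k) (Fin.castSucc i))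
        (defn_ofRel hledef (Fin.last k) (Fin.castSucc j))))
    exact this.congr (fun xs => by simp [Fin.snoc_castSucc, Fin.snoc_last])
  have dVal : ∀ {k : ℕ} (xi vi : Fin k),
      DefN E k (fun xs => ∃ u, OPairMem E (xs xi) u (xs vi)) := by
    intro k xi vi
    have := defn_ex (defn_opm (E := E) (Fin.castSucc xi) (Fin.last k) (Fin.castSucc vi))
    exact this.congr (fun xs => by simp [Fin.snoc_castSucc, Fin.snoc_last])
  have dBad : ∀ {k : ℕ} (xi : Fin k),
      DefN E k (fun xs => ∃ p, p ∈ P ∧ ∀ v, (∃ u, OPairMem E (xs xi) u v) →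
        ¬ ∃ w, w ∈ P ∧ le w p ∧ le w v) := by
    intro k xi
    have := defn_ex (defn_and (defn_ofClass hPdef (Fin.last k))
      (defn_all (defn_imp (dVal (Fin.castSucc (Fin.castSucc xi)) (Fin.last (k+1)))
        (defn_not (dCompat (Fin.castSucc (Fin.last k)) (Fin.last (k+1)))))))
    exact this.congr (fun xs => by simp [Fin.snoc_castSucc, Fin.snoc_last])
  have dPhi : DefN E 2 (fun xs =>
      (∃ p, p ∈ P ∧ ∀ v, (∃ u, OPairMem E (xs 0) u v) → ¬ ∃ w, w ∈ P ∧ le w p ∧ le w v) →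
      ((xs 1) ∈ D ∧ ∃ p, p ∈ P ∧ le (xs 1) p ∧ ∀ v, (∃ u, OPairMem E (xs 0) u v) →
        ¬ ∃ w, w ∈ P ∧ le w p ∧ le w v)) := by
    have inner := defn_ex (defn_and (defn_ofClass hPdef (Fin.last 2))
      (defn_and (defn_ofRel hledef (Fin.castSucc 1) (Fin.last 2))
        (defn_all (defn_imp (dVal (k := 4) 0 3)
          (defn_not (dCompat (k := 4) 2 3))))))
    have := defn_imp (dBad (k := 2) 0) (defn_and (defn_ofClass hDdef 1) inner)
    exact this.congr (fun xs => by
      simp [Fin.snoc_castSucc, Fin.snoc_last])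
  -- Totality of the DC relation
  have tot : ∀ x, ∃ y, (fun xs : Fin 2 → W =>
      (∃ p, p ∈ P ∧ ∀ v, (∃ u, OPairMem E (xs 0) u v) → ¬ ∃ w, w ∈ P ∧ le w p ∧ le w v) →
      ((xs 1) ∈ D ∧ ∃ p, p ∈ P ∧ le (xs 1) p ∧ ∀ v, (∃ u, OPairMem E (xs 0) u v) →
        ¬ ∃ w, w ∈ P ∧ le w p ∧ le w v)) ![x, y] := by
    intro x
    by_cases hbx : ∃ p, p ∈ P ∧ ∀ v, (∃ u, OPairMem E x u v) → ¬ ∃ w, w ∈ P ∧ le w p ∧ le w v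
    · obtain ⟨p, hpP, hpinc⟩ := hbx
      obtain ⟨y, hyD, hyp⟩ := hdens p hpP
      refine ⟨y, fun _ => ⟨hyD, p, hpP, hyp, ?_⟩⟩
      simpa using hpinc
    · exact ⟨e0, fun hb => absurd (by simpa using hb) hbx⟩
  obtain ⟨f, hfFun, hfDC⟩ := dcD hDC dPhi tot
  have hfApp := hfFun.2.2
  -- The main consequence of the DC property at a stage with all-bad restrictions
  have main : ∀ ξ, E ξ δ → (∀ g, IsRestrictionOf E f ξ g →
        ∃ p, p ∈ P ∧ ∀ v, (∃ u, OPairMem E g u v) → ¬ ∃ w, w ∈ P ∧ le w p ∧ le w v) →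
      ∀ v, OPairMem E f ξ v → (v ∈ D ∧ ∃ p, p ∈ P ∧ le v p ∧
        ∀ v', (∃ u, E u ξ ∧ OPairMem E f u v') → ¬ ∃ w, w ∈ P ∧ le w p ∧ le w v') := by
    intro ξ hξ hbad v hv
    obtain ⟨g, v₀, hg, hv₀, hφ⟩ := hfDC ξ hξ
    have hveq : v = v₀ := hfApp ξ v v₀ hv hv₀
    subst hveq
    have hB := hφ (by simpa using hbad g hg)
    simp only [Matrix.cons_val_zero, Matrix.cons_val_one, Matrix.head_cons] at hB
    obtain ⟨hvD, p, hpP, hvp, hpinc⟩ := hB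
    refine ⟨hvD, p, hpP, hvp, fun v' hv' => ?_⟩
    obtain ⟨u, huξ, hufv'⟩ := hv'
    exact hpinc v' ⟨u, (restr_opm hg).2 ⟨huξ, hufv'⟩⟩
  -- incompatibility of values at distinct stages with all-bad restrictions at the larger one
  have pair_incomp : ∀ η η', E η δ → E η' δ → E η η' →
      (∀ g, IsRestrictionOf E f η' g →
        ∃ p, p ∈ P ∧ ∀ v, (∃ u, OPairMem E g u v) → ¬ ∃ w, w ∈ P ∧ le w p ∧ le w v) →
      ∀ u v, OPairMem E f η u → OPairMem E f η' v →
        ¬ ∃ w, w ∈ P ∧ le w u ∧ le w v := by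
    intro η η' hη hη' hηη' hbad u v hu hv
    rintro ⟨w, hwP, hwu, hwv⟩
    obtain ⟨hvD, p, hpP, hvp, hpinc⟩ := main η' hη' hbad v hv
    exact hpinc u ⟨η, hηη', hu⟩ ⟨w, hwP, htrans w v p hwP (hDP hvD) hpP hwv hvp, hwu⟩
  -- distinct stages give distinct values
  have val_distinct : ∀ η η', E η δ → E η' δ →
      (∀ ξ₁, E ξ₁ δ → (∀ g, IsRestrictionOf E f ξ₁ g →
        ∃ p, p ∈ P ∧ ∀ v, (∃ u, OPairMem E g u v) → ¬ ∃ w, w ∈ P ∧ le w p ∧ le w v)) →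
      ∀ u v, OPairMem E f η u → OPairMem E f η' v → u = v → η = η' := by
    intro η η' hη hη' hbadall u v hu hv huv
    subst huv
    by_contra hne
    rcases hδord.2 η η' hη hη' with h | h | h
    · obtain ⟨g, v₀, hg, hv₀, _⟩ := hfDC η hη
      have hvD : u ∈ D := (main η hη (fun g hg' => hbadall η hη g hg') u hu).1
      exact pair_incomp η η' hη hη' h (fun g hg' => hbadall η' hη' g hg') u u hu hv
        ⟨u, hDP hvD, hrefl u (hDP hvD), hrefl u (hDP hvD)⟩
    · exact hne h
    · have hvD : u ∈ D := (main η hη (fun g hg' => hbadall η hη g hg') u hu).1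
      exact pair_incomp η' η hη' hη h (fun g hg' => hbadall η hη g hg') u u hv hu
        ⟨u, hDP hvD, hrefl u (hDP hvD), hrefl u (hDP hvD)⟩
  -- definability of restrictions (with parameter f)
  have dRestr : ∀ {k : ℕ} (ξi gi : Fin k),
      DefN E k (fun xs => IsRestrictionOf E f (xs ξi) (xs gi)) := by
    intro k ξi gi
    have inner := defn_ex (defn_ex (defn_and
      (defn_mem (E := E) (Fin.castSucc (Fin.last (k+1)))
        (Fin.castSucc (Fin.castSucc (Fin.castSucc ξi))))
      (defn_isOPair (E := E) (Fin.castSucc (Fin.last (k+1))) (Fin.last (k+2))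
        (Fin.castSucc (Fin.castSucc (Fin.last k))))))
    have := defn_all (defn_iff (defn_mem (E := E) (Fin.last k) (Fin.castSucc gi))
      (defn_and (defn_mem_constR (E := E) f (Fin.last k)) inner))
    exact this.congr (fun xs => by
      simp [IsRestrictionOf, Fin.snoc_castSucc, Fin.snoc_last])
  -- Case split: is there a stage whose restriction is "not bad"?
  by_cases hstab : ∃ ξ, E ξ δ ∧ ∃ g, IsRestrictionOf E f ξ g ∧
      ¬ ∃ p, p ∈ P ∧ ∀ v, (∃ u, OPairMem E g u v) → ¬ ∃ w, w ∈ P ∧ le w p ∧ le w v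
  · -- Good case: extract the minimal such stage
    have dQ : DefN E 1 (fun xs => E (xs 0) δ ∧ ∃ g, IsRestrictionOf E f (xs 0) g ∧
        ¬ ∃ p, p ∈ P ∧ ∀ v, (∃ u, OPairMem E g u v) → ¬ ∃ w, w ∈ P ∧ le w p ∧ le w v) := by
      have := defn_and (defn_mem_constR (E := E) (k := 1) δ 0)
        (defn_ex (defn_and (dRestr (k := 2) 0 1) (defn_not (dBad (k := 2) 1))))
      exact this.congr (fun xs => by simp [Fin.snoc_castSucc, Fin.snoc_last])
    obtain ⟨ξ₀, hQξ₀, hminQ⟩ := foundD hfound dQ (by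
      obtain ⟨ξ, h1, h2⟩ := hstab
      exact ⟨ξ, h1, h2⟩)
    simp only [Matrix.cons_val_zero] at hQξ₀
    obtain ⟨hξ₀δ, g₀, hg₀, hg₀good⟩ := hQξ₀
    have hbadbelow : ∀ η, E η ξ₀ → (∀ g, IsRestrictionOf E f η g →
        ∃ p, p ∈ P ∧ ∀ v, (∃ u, OPairMem E g u v) → ¬ ∃ w, w ∈ P ∧ le w p ∧ le w v) := by
      intro η hη g hg
      have hηδ : E η δ := hδord.1 ξ₀ hξ₀δ η hη
      by_contra hgb
      exact hminQ η hη ⟨hηδ, g, hg, hgb⟩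
    obtain ⟨A, hA⟩ := rangeSet hunion hsep f ξ₀
    refine ⟨A, ?_, ?_, ?_⟩
    · -- elements of A are in D
      intro u huA
      obtain ⟨η, hη, hopm⟩ := (hA u).1 huA
      exact (main η (hδord.1 ξ₀ hξ₀δ η hη) (hbadbelow η hη) u hopm).1
    · -- antichain
      intro u v huA hvA hne
      obtain ⟨η, hη, hou⟩ := (hA u).1 huA
      obtain ⟨η', hη', hov⟩ := (hA v).1 hvA
      have hηδ : E η δ := hδord.1 ξ₀ hξ₀δ η hη
      have hη'δ : E η' δ := hδord.1 ξ₀ hξ₀δ η' hη'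
      have hne' : η ≠ η' := fun h => hne (hfApp η u v hou (h ▸ hov))
      rcases hδord.2 η η' hηδ hη'δ with h | h | h
      · exact pair_incomp η η' hηδ hη'δ h (hbadbelow η' hη') u v hou hov
      · exact absurd h hne'
      · intro ⟨w, hwP, hwu, hwv⟩
        exact pair_incomp η' η hη'δ hηδ h (hbadbelow η hη) v u hov hou ⟨w, hwP, hwv, hwu⟩
    · -- maximality
      intro x hxP
      have : ¬ (∀ v, (∃ u, OPairMem E g₀ u v) → ¬ ∃ w, w ∈ P ∧ le w x ∧ le w v) :=
        fun hforall => hg₀good ⟨x, hxP, hforall⟩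
      push_neg at this
      obtain ⟨v, ⟨u, hugv⟩, w, hwP, hwx, hwv⟩ := this
      have := (restr_opm hg₀).1 hugv
      exact ⟨v, (hA v).2 ⟨u, this.1, this.2⟩, w, hwP, hwx, hwv⟩
  · -- Bad case: derive a contradiction
    exfalso
    have hbadall : ∀ ξ, E ξ δ → (∀ g, IsRestrictionOf E f ξ g →
        ∃ p, p ∈ P ∧ ∀ v, (∃ u, OPairMem E g u v) → ¬ ∃ w, w ∈ P ∧ le w p ∧ le w v) := by
      intro ξ hξ g hg
      by_contra hgb
      exact hstab ⟨ξ, hξ, g, hg, hgb⟩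
    obtain ⟨A', hA'⟩ := rangeSet hunion hsep f δ
    have hA'P : ∀ u, E u A' → u ∈ P := by
      intro u huA
      obtain ⟨η, hη, hopm⟩ := (hA' u).1 huA
      exact hDP (main η hη (hbadall η hη) u hopm).1
    have hA'anti : ∀ u v, E u A' → E v A' → u ≠ v → ¬ ∃ w, w ∈ P ∧ le w u ∧ le w v := by
      intro u v huA hvA hne
      obtain ⟨η, hη, hou⟩ := (hA' u).1 huA
      obtain ⟨η', hη', hov⟩ := (hA' v).1 hvA
      have hne' : η ≠ η' := fun h => hne (hfApp η u v hou (h ▸ hov))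
      rcases hδord.2 η η' hη hη' with h | h | h
      · exact pair_incomp η η' hη hη' h (hbadall η' hη') u v hou hov
      · exact absurd h hne'
      · intro ⟨w, hwP, hwu, hwv⟩
        exact pair_incomp η' η hη' hη h (hbadall η hη) v u hov hou ⟨w, hwP, hwv, hwu⟩
    obtain ⟨γ, hγδ, h, hInj⟩ := hcc A' hA'P hA'anti
    obtain ⟨hhFun, hhMaps, hhInj⟩ := hInj
    -- Jrel ξ v := ∃ c, OPairMem f ξ c ∧ OPairMem h c v
    have dJrel : DefN E 2 (fun xs => ∃ c, OPairMem E f (xs 0) c ∧ OPairMem E h c (xs 1)) := by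
      have := defn_ex (defn_and (defn_opm_const (E := E) (k := 3) f 0 2)
        (defn_opm_const (E := E) (k := 3) h 2 1))
      exact this.congr (fun xs => by simp [Fin.snoc_castSucc, Fin.snoc_last])
    have jrel_fnal : ∀ x y y', (∃ c, OPairMem E f x c ∧ OPairMem E h c y) →
        (∃ c, OPairMem E f x c ∧ OPairMem E h c y') → y = y' := by
      rintro x y y' ⟨c, hfc, hhc⟩ ⟨c', hfc', hhc'⟩
      have : c = c' := hfApp x c c' hfc hfc'
      subst this
      exact hhFun.2.2 c y y' hhc hhc'
    have jrel_tot : ∀ x, E x δ → ∃ y, ∃ c, OPairMem E f x c ∧ OPairMem E h c y := by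
      intro x hx
      obtain ⟨c, hc⟩ := hfFun.2.1 x hx
      have hcA : E c A' := (hA' c).2 ⟨x, hx, hc⟩
      obtain ⟨v, hv⟩ := hhFun.2.1 c hcA
      exact ⟨v, c, hc, hv⟩
    obtain ⟨jset, hjFun, hjchar⟩ := mkFun hpair hsep hcoll dJrel δ jrel_tot jrel_fnal
    have jrel_inj : ∀ ξ ξ' v, E ξ δ → E ξ' δ →
        (∃ c, OPairMem E f ξ c ∧ OPairMem E h c v) →
        (∃ c, OPairMem E f ξ' c ∧ OPairMem E h c v) → ξ = ξ' := by
      rintro ξ ξ' v hξ hξ' ⟨c, hfc, hhc⟩ ⟨c', hfc', hhc'⟩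
      have : c = c' := hhInj c c' v hhc hhc'
      subst this
      exact val_distinct ξ ξ' hξ hξ' hbadall c c hfc hfc' rfl
    have jmaps : ∀ x v, OPairMem E jset x v → E v γ := by
      intro x v hxv
      obtain ⟨hxδ, c, hfc, hhc⟩ := (hjchar x v).1 hxv
      exact hhMaps c v hhc
    have dRk : DefN E 2 (fun xs =>
        (E (xs 1) δ ∧ ∃ c, OPairMem E f (xs 1) c ∧ OPairMem E h c (xs 0)) ∨
        ((¬ ∃ ξ', E ξ' δ ∧ ∃ c, OPairMem E f ξ' c ∧ OPairMem E h c (xs 0)) ∧ xs 1 = γ)) := by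
      have d1 := defn_and (defn_mem_constR (E := E) (k := 2) δ 1)
        ((defn_comp (fun t : Fin 2 => if t = 0 then (1 : Fin 2) else 0) dJrel).congr
          (fun xs => Iff.rfl))
      have d2 := defn_ex (defn_and (defn_mem_constR (E := E) (k := 3) δ 2)
        ((defn_comp (fun t : Fin 2 => if t = 0 then (2 : Fin 3) else 0) dJrel).congr
          (fun xs => Iff.rfl)))
      have := defn_or d1 (defn_and (defn_not d2) (defn_eq_const (E := E) (k := 2) 1 γ))
      exact this.congr (fun xs => by simp [Fin.snoc_castSucc, Fin.snoc_last])
    have hk_tot : ∀ v, E v γ → ∃ ξ,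
        (E ξ δ ∧ ∃ c, OPairMem E f ξ c ∧ OPairMem E h c v) ∨
        ((¬ ∃ ξ', E ξ' δ ∧ ∃ c, OPairMem E f ξ' c ∧ OPairMem E h c v) ∧ ξ = γ) := by
      intro v _
      by_cases hex : ∃ ξ', E ξ' δ ∧ ∃ c, OPairMem E f ξ' c ∧ OPairMem E h c v
      · obtain ⟨ξ', h1, h2⟩ := hex
        exact ⟨ξ', Or.inl ⟨h1, h2⟩⟩
      · exact ⟨γ, Or.inr ⟨hex, rfl⟩⟩
    have hk_fnal : ∀ v ξ ξ', ((E ξ δ ∧ ∃ c, OPairMem E f ξ c ∧ OPairMem E h c v) ∨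
        ((¬ ∃ ξ'', E ξ'' δ ∧ ∃ c, OPairMem E f ξ'' c ∧ OPairMem E h c v) ∧ ξ = γ)) →
        ((E ξ' δ ∧ ∃ c, OPairMem E f ξ' c ∧ OPairMem E h c v) ∨
        ((¬ ∃ ξ'', E ξ'' δ ∧ ∃ c, OPairMem E f ξ'' c ∧ OPairMem E h c v) ∧ ξ' = γ)) →
        ξ = ξ' := by
      rintro v ξ ξ' (⟨h1, h2⟩ | ⟨h1, rfl⟩) (⟨h1', h2'⟩ | ⟨h1', rfl⟩)
      · exact jrel_inj ξ ξ' v h1 h1' h2 h2'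
      · exact absurd ⟨ξ, h1, h2⟩ h1'
      · exact absurd ⟨ξ', h1', h2'⟩ h1
      · rfl
    obtain ⟨kfun, hkFun, hkchar⟩ := mkFun hpair hsep hcoll dRk γ hk_tot hk_fnal
    have hkMaps : MapsInto E kfun δ := by
      intro v ξ hvξ
      rcases ((hkchar v ξ).1 hvξ).2 with ⟨h1, _⟩ | ⟨_, rfl⟩
      · exact h1
      · exact hγδ
    obtain ⟨β, hβδ, hβbound⟩ := hδreg γ kfun hγδ hkFun hkMaps
    have hbound : ∀ ξ, E ξ δ → E ξ β ∨ ξ = β := by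
      intro ξ hξ
      obtain ⟨c, hfc⟩ := hfFun.2.1 ξ hξ
      have hcA : E c A' := (hA' c).2 ⟨ξ, hξ, hfc⟩
      obtain ⟨v, hhv⟩ := hhFun.2.1 c hcA
      have hvγ : E v γ := hhMaps c v hhv
      have : OPairMem E kfun v ξ := (hkchar v ξ).2 ⟨hvγ, Or.inl ⟨hξ, c, hfc, hhv⟩⟩
      exact hβbound v ξ this
    have hβord : IsOrd E β := ord_mem_ord hfound ⟨hδord.1, hδord.2⟩ hβδ
    have hγsubβ : ∀ v, E v γ → E v β := by
      intro v hv
      rcases hbound γ hγδ with h | h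
      · exact hβord.1 γ h v hv
      · exact h ▸ hv
    -- the orbit O of β under jset
    have dQO : DefN E 1 (fun xs => ∀ s, (E β s ∧ ∀ u v, E u s → OPairMem E jset u v → E v s)
        → E (xs 0) s) := by
      have inner := defn_all (defn_all (defn_imp (defn_mem (E := E) (k := 4) 2 1)
        (defn_imp (defn_opm_const (E := E) (k := 4) jset 2 3) (defn_mem (E := E) (k := 4) 3 1))))
      have := defn_all (defn_imp (defn_and (defn_mem_constL (E := E) (k := 2) β 1) inner)
        (defn_mem (E := E) (k := 2) 0 1))
      exact this.congr (fun xs => by simp [Fin.snoc_castSucc, Fin.snoc_last])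
    obtain ⟨O, hO⟩ := sepD hsep dQO δ
    simp only [Matrix.cons_val_zero] at hO
    have hjval_memδ : ∀ x v, OPairMem E jset x v → E v δ := by
      intro x v hxv
      exact hδord.1 β hβδ v (hγsubβ v (jmaps x v hxv))
    have hβO : E β O := (hO β).2 ⟨hβδ, fun s hs => hs.1⟩
    have hOclosed : ∀ x v, E x O → OPairMem E jset x v → E v O := by
      intro x v hxO hxv
      obtain ⟨hxδ, hQx⟩ := (hO x).1 hxO
      exact (hO v).2 ⟨hjval_memδ x v hxv, fun s hs => hs.2 x v (hQx s hs) hxv⟩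
    have hOsubδ : ∀ x, E x O → E x δ := fun x hx => ((hO x).1 hx).1
    have hOsplit : ∀ x, E x O → x = β ∨ ∃ u, E u O ∧ OPairMem E jset u x := by
      have dQ0 : DefN E 1 (fun xs => xs 0 = β ∨ ∃ u, E u O ∧ OPairMem E jset u (xs 0)) := by
        have := defn_or (defn_eq_const (E := E) (k := 1) 0 β)
          (defn_ex (defn_and (defn_mem_constR (E := E) (k := 2) O 1)
            (defn_opm_const (E := E) (k := 2) jset 1 0)))
        exact this.congr (fun xs => by simp [Fin.snoc_castSucc, Fin.snoc_last])
      obtain ⟨s₀, hs₀⟩ := sepD hsep dQ0 δ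
      simp only [Matrix.cons_val_zero] at hs₀
      intro x hxO
      have hcl : E β s₀ ∧ ∀ u v, E u s₀ → OPairMem E jset u v → E v s₀ := by
        constructor
        · exact (hs₀ β).2 ⟨hβδ, Or.inl rfl⟩
        · intro u v hus hjuv
          refine (hs₀ v).2 ⟨hjval_memδ u v hjuv, ?_⟩
          rcases ((hs₀ u).1 hus).2 with rfl | ⟨u', hu'O, hju'u⟩
          · exact Or.inr ⟨u, hβO, hjuv⟩
          · exact Or.inr ⟨u, hOclosed u' u hu'O hju'u, hjuv⟩
      exact ((hs₀ x).1 (((hO x).1 hxO).2 s₀ hcl)).2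
    -- gset : the Hilbert-hotel bijection δ → β as a set function
    have dRg : DefN E 2 (fun xs =>
        (E (xs 0) O ∧ OPairMem E jset (xs 0) (xs 1)) ∨ (¬ E (xs 0) O ∧ xs 1 = xs 0)) := by
      have := defn_or (defn_and (defn_mem_constR (E := E) (k := 2) O 0)
          (defn_opm_const (E := E) (k := 2) jset 0 1))
        (defn_and (defn_not (defn_mem_constR (E := E) (k := 2) O 0))
          (defn_eq (E := E) (k := 2) 1 0))
      exact this.congr (fun xs => Iff.rfl)
    have hg_tot : ∀ x, E x δ → ∃ y,
        (E x O ∧ OPairMem E jset x y) ∨ (¬ E x O ∧ y = x) := by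
      intro x hx
      by_cases hxO : E x O
      · obtain ⟨y, hy⟩ := hjFun.2.1 x hx
        exact ⟨y, Or.inl ⟨hxO, hy⟩⟩
      · exact ⟨x, Or.inr ⟨hxO, rfl⟩⟩
    have hg_fnal : ∀ x y y', ((E x O ∧ OPairMem E jset x y) ∨ (¬ E x O ∧ y = x)) →
        ((E x O ∧ OPairMem E jset x y') ∨ (¬ E x O ∧ y' = x)) → y = y' := by
      rintro x y y' (⟨h1, h2⟩ | ⟨h1, rfl⟩) (⟨h1', h2'⟩ | ⟨h1', rfl⟩)
      · exact hjFun.2.2 x y y' h2 h2'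
      · exact absurd h1 h1'
      · exact absurd h1' h1
      · rfl
    obtain ⟨gset, hgFun, hgchar⟩ := mkFun hpair hsep hcoll dRg δ hg_tot hg_fnal
    have hgMaps : MapsInto E gset β := by
      intro x y hxy
      obtain ⟨hxδ, hRg⟩ := (hgchar x y).1 hxy
      rcases hRg with ⟨hxO, hjxy⟩ | ⟨hxO, heq⟩
      · exact hγsubβ y (jmaps x y hjxy)
      · rcases hbound x hxδ with h | heq2
        · exact heq ▸ h
        · exact absurd (heq2 ▸ hβO) hxO
    have hg_inj : ∀ x x' y, OPairMem E gset x y → OPairMem E gset x' y → x = x' := by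
      intro x x' y hxy hx'y
      obtain ⟨hxδ, hRg⟩ := (hgchar x y).1 hxy
      obtain ⟨hx'δ, hRg'⟩ := (hgchar x' y).1 hx'y
      rcases hRg with ⟨hxO, hjxy⟩ | ⟨hxO, e1⟩ <;> rcases hRg' with ⟨hx'O, hjx'y⟩ | ⟨hx'O, e2⟩
      · exact jrel_inj x x' y hxδ hx'δ
          (((hjchar x y).1 hjxy).2) (((hjchar x' y).1 hjx'y).2)
      · exact absurd (e2 ▸ hOclosed x y hxO hjxy) hx'O
      · exact absurd (e1 ▸ hOclosed x' y hx'O hjx'y) hxO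
      · exact e1.symm.trans e2
    have hg_surj : ∀ y, E y β → ∃ x, E x δ ∧ OPairMem E gset x y := by
      intro y hyβ
      have hyδ : E y δ := hδord.1 β hβδ y hyβ
      by_cases hyO : E y O
      · have hyneβ : y ≠ β := fun h => no_cycle1 hfound β (h ▸ hyβ)
        rcases hOsplit y hyO with h | ⟨u, huO, hjuy⟩
        · exact absurd h hyneβ
        · exact ⟨u, hOsubδ u huO, (hgchar u y).2 ⟨hOsubδ u huO, Or.inl ⟨huO, hjuy⟩⟩⟩
      · exact ⟨y, hyδ, (hgchar y y).2 ⟨hyδ, Or.inr ⟨hyO, rfl⟩⟩⟩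
    -- the inverse bijection β → δ
    have dRinv : DefN E 2 (fun xs => OPairMem E gset (xs 1) (xs 0)) :=
      defn_opm_const (E := E) (k := 2) gset 1 0
    have hinv_tot : ∀ v, E v β → ∃ x, OPairMem E gset x v := by
      intro v hv
      obtain ⟨x, _, hx⟩ := hg_surj v hv
      exact ⟨x, hx⟩
    have hinv_fnal : ∀ v x x', OPairMem E gset x v → OPairMem E gset x' v → x = x' :=
      fun v x x' h1 h2 => hg_inj x x' v h1 h2
    obtain ⟨finv, hfinvFun, hfinvchar⟩ := mkFun hpair hsep hcoll dRinv β hinv_tot hinv_fnal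
    have hfinvMaps : MapsInto E finv δ := by
      intro v x hvx
      exact ((hgchar x v).1 ((hfinvchar v x).1 hvx).2).1
    refine hδcard β hβδ ⟨finv, ⟨hfinvFun, hfinvMaps, ?_⟩, hfinvFun, hfinvMaps, ?_⟩
    · -- injectivity of finv
      intro v v' x h1 h2
      have hg1 : OPairMem E gset x v := ((hfinvchar v x).1 h1).2
      have hg2 : OPairMem E gset x v' := ((hfinvchar v' x).1 h2).2
      exact hgFun.2.2 x v v' hg1 hg2
    · -- surjectivity of finv onto δ
      intro x hxδ
      obtain ⟨v, hv⟩ := hgFun.2.1 x hxδ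
      have hvβ : E v β := hgMaps x v hv
      exact ⟨v, hvβ, (hfinvchar v x).2 ⟨hvβ, hv⟩⟩
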